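/- Let a finite rooted tree be given, and let K ⊆ ℝ^{V⁰} be the polytope K(T). Let x ∈ K satisfy x_u > 0 for every u ∈ V⁰. Then the normal cone N_K(x) := { μ ∈ ℝ^{V⁰} : Σ_{u∈V⁰} μ_u·(y_u − x_u) ≤ 0 for all y ∈ K } equals the set { μ ∈ ℝ^{V⁰} : there exists λ : V → ℝ with λ_u = 0 for every leaf u and μ_u = λ_u − λ_{p_u} for all u ∈ V⁰ }. -/
import Mathlib


open Finset


lemma iter_dep {V : Type*} (r : V) (p : V → V) (dep : V → ℕ)
    (hdep_r : dep r = 0)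
    (hdep : ∀ u, u ≠ r → dep u = dep (p u) + 1) :
    ∀ k v, k ≤ dep v → dep (p^[k] v) + k = dep v := by
  intro k
  induction k with
  | zero => intro v _; simp
  | succ n ih =>
    intro v hv
    have hvr : v ≠ r := by rintro rfl; omega
    have hd := hdep v hvr
    rw [Function.iterate_succ_apply]
    have := ih (p v) (by omega)
    omega

lemma reach {V : Type*} (r : V) (p : V → V) (dep : V → ℕ)
    (hdep_r : dep r = 0)
    (hdep : ∀ u, u ≠ r → dep u = dep (p u) + 1) :
    ∀ v, p^[dep v] v = r := by
  intro v
  have h := iter_dep r p dep hdep_r hdep (dep v) v le_rfl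
  by_contra hne
  have := hdep _ hne
  omega

open Classical in
noncomputable def pathInd {V : Type*} (p : V → V) (dep : V → ℕ) (ℓ : V) : V → ℝ :=
  fun u => if ∃ k, k ≤ dep ℓ ∧ p^[k] ℓ = u then 1 else 0

section
variable {V : Type*} [Fintype V] [DecidableEq V] (r : V) (p : V → V) (dep : V → ℕ)

lemma pathInd_r (hdep_r : dep r = 0) (hdep : ∀ u, u ≠ r → dep u = dep (p u) + 1)
    (ℓ : V) : pathInd p dep ℓ r = 1 := by
  unfold pathInd
  rw [if_pos ⟨dep ℓ, le_rfl, reach r p dep hdep_r hdep ℓ⟩]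

lemma pathInd_mem (ℓ u : V) : pathInd p dep ℓ u = 0 ∨ pathInd p dep ℓ u = 1 := by
  unfold pathInd; split
  · right; rfl
  · left; rfl

lemma pathInd_leaf (hdep_r : dep r = 0) (hdep : ∀ u, u ≠ r → dep u = dep (p u) + 1)
    (ℓ : V) (a : V) (ha : a ≠ r ∧ ∀ v, v ≠ r → p v ≠ a) :
    pathInd p dep ℓ a = if a = ℓ then 1 else 0 := by
  unfold pathInd
  by_cases h : a = ℓ
  · subst h; rw [if_pos rfl, if_pos ⟨0, Nat.zero_le _, rfl⟩]
  · rw [if_neg h, if_neg ?_]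
    rintro ⟨k, hk, hpk⟩
    rcases Nat.eq_zero_or_pos k with rfl | hkpos
    · exact h hpk.symm
    obtain ⟨n, rfl⟩ := Nat.exists_eq_succ_of_ne_zero (Nat.pos_iff_ne_zero.mp hkpos)
    have hpv : p (p^[n] ℓ) = a := by rw [← Function.iterate_succ_apply' p n ℓ]; exact hpk
    have hdv := iter_dep r p dep hdep_r hdep n ℓ (by omega)
    have hvr : p^[n] ℓ ≠ r := by
      intro hr; rw [hr, hdep_r] at hdv; omega
    exact ha.2 _ hvr hpv

lemma pathInd_cons (hdep_r : dep r = 0) (hdep : ∀ u, u ≠ r → dep u = dep (p u) + 1)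
    (ℓ : V) (hl : ℓ ≠ r ∧ ∀ v, v ≠ r → p v ≠ ℓ)
    (u : V) (hu : ¬(u ≠ r ∧ ∀ v, v ≠ r → p v ≠ u)) :
    ∑ v ∈ univ.filter (fun v => v ≠ r ∧ p v = u), pathInd p dep ℓ v
      = pathInd p dep ℓ u := by
  classical
  unfold pathInd
  by_cases hanc : ∃ k, k ≤ dep ℓ ∧ p^[k] ℓ = u
  · obtain ⟨k, hk, hpk⟩ := hanc
    have hune : u ≠ ℓ := by rintro rfl; exact hu hl
    have hk0 : k ≠ 0 := by rintro rfl; exact hune hpk.symm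
    obtain ⟨n, rfl⟩ := Nat.exists_eq_succ_of_ne_zero hk0
    have hpv₀ : p (p^[n] ℓ) = u := by rw [← Function.iterate_succ_apply' p n ℓ]; exact hpk
    have hdv₀ := iter_dep r p dep hdep_r hdep n ℓ (by omega)
    have hv₀r : p^[n] ℓ ≠ r := by
      intro hr; rw [hr, hdep_r] at hdv₀; omega
    have hdu : dep u + (n + 1) = dep ℓ := by
      have := iter_dep r p dep hdep_r hdep (n + 1) ℓ hk
      rw [hpk] at this; exact this
    rw [if_pos ⟨n + 1, hk, hpk⟩]
    rw [Finset.sum_eq_single_of_mem (p^[n] ℓ)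
      (by simp only [Finset.mem_filter, Finset.mem_univ, true_and]; exact ⟨hv₀r, hpv₀⟩)
      ?_]
    · rw [if_pos ⟨n, by omega, rfl⟩]
    · intro v hv hvne
      simp only [Finset.mem_filter, Finset.mem_univ, true_and] at hv
      rw [if_neg ?_]
      rintro ⟨j, hj, hpj⟩
      have hdj := iter_dep r p dep hdep_r hdep j ℓ hj
      have hdv : dep v = dep u + 1 := by rw [hdep v hv.1, hv.2]
      have hjn : j = n := by rw [hpj] at hdj; omega
      exact hvne (by rw [← hpj, hjn])
  · rw [if_neg hanc]
    refine Finset.sum_eq_zero fun v hv => ?_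
    simp only [Finset.mem_filter, Finset.mem_univ, true_and] at hv
    rw [if_neg ?_]
    rintro ⟨j, hj, hpj⟩
    have hdj := iter_dep r p dep hdep_r hdep j ℓ hj
    have hdv1 : 1 ≤ dep v := by rw [hdep v hv.1]; omega
    refine hanc ⟨j + 1, ?_, ?_⟩
    · rw [hpj] at hdj; omega
    · rw [Function.iterate_succ_apply', hpj, hv.2]

end

lemma key_sum {V : Type*} [Fintype V] [DecidableEq V]
    (r : V) (p : V → V)
    (lam w : V → ℝ) (hwr : w r = 0)
    (hcons : ∀ u, ¬(u ≠ r ∧ ∀ v, v ≠ r → p v ≠ u) →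
      ∑ v ∈ univ.filter (fun v => v ≠ r ∧ p v = u), w v = w u) :
    ∑ u ∈ univ.filter (fun u => u ≠ r), (lam u - lam (p u)) * w u
      = ∑ a : V, if (a ≠ r ∧ ∀ v, v ≠ r → p v ≠ a) then lam a * w a else 0 := by
  classical
  have h1 : ∑ u ∈ univ.filter (fun u => u ≠ r), lam u * w u = ∑ u : V, lam u * w u := by
    rw [Finset.filter_ne', Finset.sum_erase]
    simp [hwr]
  have h2 : ∑ u ∈ univ.filter (fun u => u ≠ r), lam (p u) * w u
      = ∑ a : V, if (a ≠ r ∧ ∀ v, v ≠ r → p v ≠ a) then 0 else lam a * w a := by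
    rw [← Finset.sum_fiberwise_of_maps_to (fun u _ => Finset.mem_univ (p u))
      (fun u => lam (p u) * w u)]
    refine Finset.sum_congr rfl fun a _ => ?_
    have hf : (univ.filter (fun u => u ≠ r)).filter (fun u => p u = a)
        = univ.filter (fun v => v ≠ r ∧ p v = a) := by
      rw [Finset.filter_filter]
    have : ∑ u ∈ (univ.filter (fun u => u ≠ r)).filter (fun u => p u = a),
        lam (p u) * w u = lam a * ∑ v ∈ univ.filter (fun v => v ≠ r ∧ p v = a), w v := by
      rw [hf, Finset.mul_sum]
      refine Finset.sum_congr rfl fun v hv => ?_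
      rw [Finset.mem_filter] at hv
      rw [hv.2.2]
    rw [this]
    by_cases hleaf : (a ≠ r ∧ ∀ v, v ≠ r → p v ≠ a)
    · rw [if_pos hleaf]
      have : univ.filter (fun v => v ≠ r ∧ p v = a) = ∅ := by
        ext v; simp only [Finset.mem_filter, Finset.mem_univ, true_and,
          Finset.notMem_empty, iff_false]
        rintro ⟨hv, hpv⟩; exact hleaf.2 v hv hpv
      rw [this]; simp
    · rw [if_neg hleaf, hcons a hleaf]
  have h3 : ∀ u ∈ univ.filter (fun u => u ≠ r), (lam u - lam (p u)) * w u
      = lam u * w u - lam (p u) * w u := fun u _ => by ring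
  rw [Finset.sum_congr rfl h3, Finset.sum_sub_distrib, h1, h2, ← Finset.sum_sub_distrib]
  refine Finset.sum_congr rfl fun a _ => ?_
  by_cases hleaf : (a ≠ r ∧ ∀ v, v ≠ r → p v ≠ a)
  · rw [if_pos hleaf, if_pos hleaf]; ring
  · rw [if_neg hleaf, if_neg hleaf]; ring


/-- structure of the normal cone of `K(T)` at a strictly positive point:
if `x ∈ K(T)` has `x_u > 0` for all `u ∈ V⁰`, then
`N_K(x) = { μ : ∃ λ with λ = 0 on leaves and μ_u = λ_u − λ_{p_u} on V⁰ }`. -/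
theorem stmt8
    {V : Type*} [Fintype V] [DecidableEq V]
    (r : V) (p : V → V) (dep : V → ℕ)
    (hdep_r : dep r = 0)
    (hdep : ∀ u, u ≠ r → dep u = dep (p u) + 1)
    (cr : V) (hcr : ∀ v, (v ≠ r ∧ p v = r) ↔ v = cr)
    (K : Set (V → ℝ))
    (hK : K = {z : V → ℝ | z r = 1 ∧ (∀ u, u ≠ r → 0 ≤ z u) ∧
      ∀ u, ¬(u ≠ r ∧ ∀ v, v ≠ r → p v ≠ u) →
        ∑ v ∈ univ.filter (fun v => v ≠ r ∧ p v = u), z v = z u})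
    (x : V → ℝ) (hx : x ∈ K) (hxpos : ∀ u, u ≠ r → 0 < x u) :
    {μ : V → ℝ | ∀ y ∈ K,
        ∑ u ∈ univ.filter (fun u => u ≠ r), μ u * (y u - x u) ≤ 0}
      = {μ : V → ℝ | ∃ lam : V → ℝ,
          (∀ u, (u ≠ r ∧ ∀ v, v ≠ r → p v ≠ u) → lam u = 0) ∧
          ∀ u, u ≠ r → μ u = lam u - lam (p u)} := by
  classical
  rw [hK] at hx
  obtain ⟨hxr, hxnn, hxcons⟩ := hx
  obtain ⟨hcrr, hpcr⟩ : cr ≠ r ∧ p cr = r := (hcr cr).mpr rfl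
  ext μ
  simp only [Set.mem_setOf_eq]
  constructor
  · intro hN
    -- define g by top-down recursion
    let f : ℕ → V → ℝ := fun n => n.rec (fun _ => (0:ℝ))
      (fun _ fn u => if u = r then 0 else μ u + fn (p u))
    have hfsucc : ∀ n u, f (n+1) u = if u = r then 0 else μ u + f n (p u) := fun n u => rfl
    set g : V → ℝ := fun u => f (dep u + 1) u with hg
    have hgrec : ∀ u, u ≠ r → μ u = g u - g (p u) := by
      intro u hu
      have h2 : dep u = dep (p u) + 1 := hdep u hu
      have h1 : g u = μ u + f (dep (p u) + 1) (p u) := by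
        rw [hg]; simp only
        rw [hfsucc, if_neg hu, h2]
      have h3 : g (p u) = f (dep (p u) + 1) (p u) := rfl
      rw [h1, h3]; ring
    -- t : minimum of x over V⁰
    obtain ⟨u₁, hu₁mem, hu₁min⟩ := Finset.exists_min_image
      (univ.filter (fun u => u ≠ r)) x
      ⟨cr, by simp only [Finset.mem_filter, Finset.mem_univ, true_and]; exact hcrr⟩
    simp only [Finset.mem_filter, Finset.mem_univ, true_and] at hu₁mem
    set t : ℝ := x u₁ with ht
    have htpos : 0 < t := hxpos u₁ hu₁mem
    have htle : ∀ u, u ≠ r → t ≤ x u := fun u hu => hu₁min u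
      (by simp only [Finset.mem_filter, Finset.mem_univ, true_and]; exact hu)
    -- for any two leaves, g ℓ ≤ g ℓ'
    have hle : ∀ ℓ ℓ', (ℓ ≠ r ∧ ∀ v, v ≠ r → p v ≠ ℓ) → (ℓ' ≠ r ∧ ∀ v, v ≠ r → p v ≠ ℓ') →
        g ℓ ≤ g ℓ' := by
      intro ℓ ℓ' hl hl'
      by_cases hne : ℓ = ℓ'
      · rw [hne]
      -- the perturbed point
      set w : V → ℝ := fun u => pathInd p dep ℓ u - pathInd p dep ℓ' u with hw
      have hwr : w r = 0 := by
        rw [hw]; simp only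
        rw [pathInd_r r p dep hdep_r hdep, pathInd_r r p dep hdep_r hdep]; ring
      have hwcons : ∀ u, ¬(u ≠ r ∧ ∀ v, v ≠ r → p v ≠ u) →
          ∑ v ∈ univ.filter (fun v => v ≠ r ∧ p v = u), w v = w u := by
        intro u hu
        rw [hw]; simp only
        rw [Finset.sum_sub_distrib, pathInd_cons r p dep hdep_r hdep ℓ hl u hu,
          pathInd_cons r p dep hdep_r hdep ℓ' hl' u hu]
      set y : V → ℝ := fun u => x u + t * w u with hy
      have hyK : y ∈ K := by
        rw [hK]
        refine ⟨by rw [hy]; simp only; rw [hwr, hxr]; ring, ?_, ?_⟩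
        · intro u hu
          rcases pathInd_mem p dep ℓ u with h1 | h1 <;>
          rcases pathInd_mem p dep ℓ' u with h2 | h2 <;>
          · rw [hy]; simp only
            rw [hw]; simp only [h1, h2]
            have := htle u hu
            have := hxpos u hu
            nlinarith
        · intro u hu
          have hxc := hxcons u hu
          have hwc := hwcons u hu
          rw [hy]; simp only
          rw [Finset.sum_add_distrib, hxc, ← Finset.mul_sum, hwc]
      have hNy := hN y hyK
      have hstep : ∑ u ∈ univ.filter (fun u => u ≠ r), μ u * (y u - x u)
          = t * ∑ u ∈ univ.filter (fun u => u ≠ r), μ u * w u := by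
        rw [Finset.mul_sum]
        refine Finset.sum_congr rfl fun u _ => ?_
        rw [hy]; simp only; ring
      rw [hstep] at hNy
      have hS : ∑ u ∈ univ.filter (fun u => u ≠ r), μ u * w u ≤ 0 := by nlinarith
      have hrw : ∑ u ∈ univ.filter (fun u => u ≠ r), μ u * w u
          = ∑ u ∈ univ.filter (fun u => u ≠ r), (g u - g (p u)) * w u := by
        refine Finset.sum_congr rfl fun u hu => ?_
        simp only [Finset.mem_filter, Finset.mem_univ, true_and] at hu
        rw [hgrec u hu]
      rw [hrw, key_sum r p g w hwr hwcons] at hS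
      have hsum : ∑ a : V, (if (a ≠ r ∧ ∀ v, v ≠ r → p v ≠ a) then g a * w a else 0)
          = g ℓ - g ℓ' := by
        rw [← Finset.sum_subset (Finset.subset_univ ({ℓ, ℓ'} : Finset V))
          (fun a _ ha => ?_)]
        · rw [Finset.sum_pair hne]
          rw [if_pos hl, if_pos hl']
          rw [hw]; simp only
          rw [pathInd_leaf r p dep hdep_r hdep ℓ ℓ hl,
            pathInd_leaf r p dep hdep_r hdep ℓ' ℓ hl,
            pathInd_leaf r p dep hdep_r hdep ℓ ℓ' hl',
            pathInd_leaf r p dep hdep_r hdep ℓ' ℓ' hl']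
          rw [if_pos rfl, if_pos rfl, if_neg hne, if_neg (Ne.symm hne)]
          ring
        · by_cases hla : (a ≠ r ∧ ∀ v, v ≠ r → p v ≠ a)
          · rw [if_pos hla]
            simp only [Finset.mem_insert, Finset.mem_singleton, not_or] at ha
            rw [hw]; simp only
            rw [pathInd_leaf r p dep hdep_r hdep ℓ a hla,
              pathInd_leaf r p dep hdep_r hdep ℓ' a hla,
              if_neg ha.1, if_neg ha.2]
            ring
          · rw [if_neg hla]
      rw [hsum] at hS
      linarith
    have hconst : ∀ ℓ ℓ', (ℓ ≠ r ∧ ∀ v, v ≠ r → p v ≠ ℓ) →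
        (ℓ' ≠ r ∧ ∀ v, v ≠ r → p v ≠ ℓ') → g ℓ = g ℓ' :=
      fun ℓ ℓ' hl hl' => le_antisymm (hle ℓ ℓ' hl hl') (hle ℓ' ℓ hl' hl)
    -- a leaf exists
    obtain ⟨ℓ₀, _, hmax⟩ := Finset.exists_max_image (univ : Finset V) dep ⟨r, Finset.mem_univ r⟩
    have hdcr : dep cr = 1 := by rw [hdep cr hcrr, hpcr, hdep_r]
    have hl₀ : ℓ₀ ≠ r ∧ ∀ v, v ≠ r → p v ≠ ℓ₀ := by
      constructor
      · intro h
        have := hmax cr (Finset.mem_univ cr)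
        rw [h, hdep_r, hdcr] at this
        omega
      · intro v hv hpv
        have h1 := hdep v hv
        have h2 := hmax v (Finset.mem_univ v)
        rw [hpv] at h1
        omega
    refine ⟨fun u => g u - g ℓ₀, fun u hu => by show g u - g ℓ₀ = 0; rw [hconst u ℓ₀ hu hl₀]; ring,
      fun u hu => by show μ u = (g u - g ℓ₀) - (g (p u) - g ℓ₀); rw [hgrec u hu]; ring⟩
  · rintro ⟨lam, hlam0, hlamμ⟩ y hy
    rw [hK] at hy
    obtain ⟨hyr, hynn, hycons⟩ := hy
    set w : V → ℝ := fun u => y u - x u with hw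
    have hwr : w r = 0 := by rw [hw]; simp only; rw [hyr, hxr]; ring
    have hwcons : ∀ u, ¬(u ≠ r ∧ ∀ v, v ≠ r → p v ≠ u) →
        ∑ v ∈ univ.filter (fun v => v ≠ r ∧ p v = u), w v = w u := by
      intro u hu
      rw [hw]; simp only
      rw [Finset.sum_sub_distrib, hycons u hu, hxcons u hu]
    have hrw : ∑ u ∈ univ.filter (fun u => u ≠ r), μ u * (y u - x u)
        = ∑ u ∈ univ.filter (fun u => u ≠ r), (lam u - lam (p u)) * w u := by
      refine Finset.sum_congr rfl fun u hu => ?_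
      simp only [Finset.mem_filter, Finset.mem_univ, true_and] at hu
      rw [hlamμ u hu]
    rw [hrw, key_sum r p lam w hwr hwcons]
    refine le_of_eq (Finset.sum_eq_zero fun a _ => ?_)
    by_cases hla : (a ≠ r ∧ ∀ v, v ≠ r → p v ≠ a)
    · rw [if_pos hla, hlam0 a hla]; ring
    · rw [if_neg hla]
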